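/- arXiv:1908.07530 — 2 statements merged into one kernel-verified Lean document; each statement's English description precedes it below -/
import Mathlib

section
/- Let Λ be a finite set, q ≥ 2, and let W and Θ be potentials on Λ. For any 0 < κ′ < κ, the potential ad_W Θ, with components (ad_W Θ)_Z = Σ_{Z₁ ∪ Z₂ = Z, Z₁ ∩ Z₂ ≠ ∅} [W_{Z₁}, Θ_{Z₂}], satisfies ‖ad_W Θ‖_{κ′} ≤ (18 / (κ′(κ − κ′))) · ‖Θ‖_{κ} · ‖W‖_{κ}. -/
open scoped Matrix.Norms.L2Operator

noncomputable section

/-- Operators on the many-body Hilbert space `ℂ^(Λ → Fin q)`, with the ℓ²→ℓ² operator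
norm. -/
abbrev Op (Λ : Type*) [Fintype Λ] [DecidableEq Λ] (q : ℕ) : Type _ :=
  Matrix (Λ → Fin q) (Λ → Fin q) ℂ

variable {Λ : Type*} [Fintype Λ] [DecidableEq Λ] {q : ℕ}

/-- `A` is supported on `Z ⊆ Λ`. -/
def SupportedOn (A : Op Λ q) (Z : Finset Λ) : Prop :=
  (∀ f g : Λ → Fin q, (∃ x, x ∉ Z ∧ f x ≠ g x) → A f g = 0) ∧
  (∀ f g f' g' : Λ → Fin q,
    (∀ x ∉ Z, f x = g x) → (∀ x ∉ Z, f' x = g' x) →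
    (∀ x ∈ Z, f' x = f x) → (∀ x ∈ Z, g' x = g x) → A f' g' = A f g)

/-- A potential is a family `Φ = (Φ_Z)` of operators with `Φ_Z` supported on `Z`. -/
def IsPotential (Φ : Finset Λ → Op Λ q) : Prop := ∀ Z, SupportedOn (Φ Z) Z

/-- The norm `‖Φ‖_κ = max_{x∈Λ} Σ_{Z ∋ x} e^{κ|Z|} ‖Φ_Z‖` of a potential. -/
def potNorm (κ : ℝ) (Φ : Finset Λ → Op Λ q) : ℝ :=
  ⨆ x : Λ, ∑ Z ∈ Finset.univ.filter (fun Z : Finset Λ => x ∈ Z),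
    Real.exp (κ * Z.card) * ‖Φ Z‖

/-- The potential `ad_W Θ` with components
`(ad_W Θ)_Z = Σ_{Z₁ ∪ Z₂ = Z, Z₁ ∩ Z₂ ≠ ∅} [W_{Z₁}, Θ_{Z₂}]`. -/
def adPot (W Θ : Finset Λ → Op Λ q) : Finset Λ → Op Λ q := fun Z =>
  ∑ p ∈ (Finset.univ : Finset (Finset Λ × Finset Λ)).filter
      (fun p => p.1 ∪ p.2 = Z ∧ (p.1 ∩ p.2).Nonempty),
    (W p.1 * Θ p.2 - Θ p.2 * W p.1)

lemma aux_potNorm_nonneg (κ : ℝ) (Φ : Finset Λ → Op Λ q) : 0 ≤ potNorm κ Φ :=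
  Real.iSup_nonneg fun _ => Finset.sum_nonneg fun _ _ =>
    mul_nonneg (Real.exp_pos _).le (norm_nonneg _)

lemma aux_site_le (κ : ℝ) (Φ : Finset Λ → Op Λ q) (y : Λ) :
    ∑ Z ∈ Finset.univ.filter (fun Z : Finset Λ => y ∈ Z),
      Real.exp (κ * Z.card) * ‖Φ Z‖ ≤ potNorm κ Φ := by
  rw [potNorm]
  exact le_ciSup (f := fun x : Λ => ∑ Z ∈ Finset.univ.filter (fun Z : Finset Λ => x ∈ Z),
    Real.exp (κ * Z.card) * ‖Φ Z‖) (Set.Finite.bddAbove (Set.finite_range _)) y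

lemma aux_sum_overlap_le (A : Finset Λ) (g : Finset Λ → ℝ) (hg : ∀ B, 0 ≤ g B) :
    ∑ B ∈ Finset.univ.filter (fun B : Finset Λ => (A ∩ B).Nonempty), g B ≤
    ∑ y ∈ A, ∑ B ∈ Finset.univ.filter (fun B : Finset Λ => y ∈ B), g B := by
  have h1 : ∀ y : Λ, ∑ B ∈ Finset.univ.filter (fun B : Finset Λ => y ∈ B), g B
      = ∑ B : Finset Λ, if y ∈ B then g B else 0 := fun y => Finset.sum_filter _ _
  rw [Finset.sum_filter]
  calc ∑ B : Finset Λ, (if (A ∩ B).Nonempty then g B else 0)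
      ≤ ∑ B : Finset Λ, ∑ y ∈ A, (if y ∈ B then g B else 0) := by
        refine Finset.sum_le_sum fun B _ => ?_
        by_cases h : (A ∩ B).Nonempty
        · obtain ⟨y, hy⟩ := h
          have hyA : y ∈ A := (Finset.mem_inter.mp hy).1
          have hyB : y ∈ B := (Finset.mem_inter.mp hy).2
          rw [if_pos ⟨y, hy⟩]
          calc g B = (if y ∈ B then g B else 0) := by rw [if_pos hyB]
            _ ≤ _ := Finset.single_le_sum (f := fun z : Λ => if z ∈ B then g B else 0)
                  (fun z _ => by by_cases hz : z ∈ B <;> simp [hz, hg B]) hyA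
        · rw [if_neg h]
          exact Finset.sum_nonneg fun z _ => by by_cases hz : z ∈ B <;> simp [hz, hg B]
    _ = ∑ y ∈ A, ∑ B : Finset Λ, (if y ∈ B then g B else 0) := Finset.sum_comm
    _ = _ := by simp [h1]

lemma aux_key {κ' κ : ℝ} (hκ' : 0 < κ') (hκ : κ' < κ) (U V : Finset Λ → Op Λ q) (x : Λ) :
    ∑ p ∈ Finset.univ.filter
        (fun p : Finset Λ × Finset Λ => x ∈ p.1 ∧ (p.1 ∩ p.2).Nonempty),
      Real.exp (κ' * (p.1 ∪ p.2).card) * (‖U p.1‖ * ‖V p.2‖)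
    ≤ 1 / (κ' * (κ - κ')) * potNorm κ U * potNorm κ V := by
  have hδ : 0 < κ - κ' := sub_pos.mpr hκ
  have hVn : 0 ≤ potNorm κ V := aux_potNorm_nonneg _ _
  set F : Finset Λ × Finset Λ → ℝ :=
    fun p => Real.exp (κ' * (p.1 ∪ p.2).card) * (‖U p.1‖ * ‖V p.2‖) with hF
  have h1 : ∑ p ∈ Finset.univ.filter
        (fun p : Finset Λ × Finset Λ => x ∈ p.1 ∧ (p.1 ∩ p.2).Nonempty), F p
      = ∑ Z₁ ∈ Finset.univ.filter (fun Z₁ : Finset Λ => x ∈ Z₁),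
          ∑ Z₂ ∈ Finset.univ.filter (fun Z₂ : Finset Λ => (Z₁ ∩ Z₂).Nonempty),
            F (Z₁, Z₂) := by
    rw [Finset.sum_filter, Fintype.sum_prod_type, Finset.sum_filter]
    refine Finset.sum_congr rfl fun Z₁ _ => ?_
    by_cases h : x ∈ Z₁
    · simp [h, Finset.sum_filter]
    · simp [h]
  rw [h1]
  have perZ₁ : ∀ Z₁ : Finset Λ,
      ∑ Z₂ ∈ Finset.univ.filter (fun Z₂ : Finset Λ => (Z₁ ∩ Z₂).Nonempty), F (Z₁, Z₂)
      ≤ 1 / (κ' * (κ - κ')) * (Real.exp (κ * Z₁.card) * ‖U Z₁‖) * potNorm κ V := by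
    intro Z₁
    set c₁ : ℝ := Real.exp (-κ') * Real.exp (-((κ - κ') * Z₁.card)) *
        Real.exp (κ * Z₁.card) * ‖U Z₁‖ with hc₁
    have hc₁n : 0 ≤ c₁ := by positivity
    calc ∑ Z₂ ∈ Finset.univ.filter (fun Z₂ : Finset Λ => (Z₁ ∩ Z₂).Nonempty), F (Z₁, Z₂)
        ≤ ∑ y ∈ Z₁, ∑ Z₂ ∈ Finset.univ.filter (fun Z₂ : Finset Λ => y ∈ Z₂), F (Z₁, Z₂) :=
          aux_sum_overlap_le Z₁ _ (fun B => by rw [hF]; positivity)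
      _ ≤ ∑ y ∈ Z₁, ∑ Z₂ ∈ Finset.univ.filter (fun Z₂ : Finset Λ => y ∈ Z₂),
            c₁ * (Real.exp (κ * Z₂.card) * ‖V Z₂‖) := by
          refine Finset.sum_le_sum fun y hy => Finset.sum_le_sum fun Z₂ hZ₂ => ?_
          have hy₂ : y ∈ Z₂ := by simpa using hZ₂
          have hcard : (Z₁ ∪ Z₂).card + 1 ≤ Z₁.card + Z₂.card := by
            have h2 := Finset.card_union_add_card_inter Z₁ Z₂
            have h3 : 1 ≤ (Z₁ ∩ Z₂).card :=
              Finset.card_pos.mpr ⟨y, Finset.mem_inter.mpr ⟨hy, hy₂⟩⟩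
            omega
          have hc : ((Z₁ ∪ Z₂).card : ℝ) + 1 ≤ (Z₁.card : ℝ) + Z₂.card := by
            exact_mod_cast hcard
          have hexp : Real.exp (κ' * (Z₁ ∪ Z₂).card)
              ≤ Real.exp (-κ') * Real.exp (-((κ - κ') * Z₁.card)) *
                Real.exp (κ * Z₁.card) * Real.exp (κ * Z₂.card) := by
            rw [← Real.exp_add, ← Real.exp_add, ← Real.exp_add]
            apply Real.exp_le_exp.mpr
            have e1 : κ' * (Z₁ ∪ Z₂).card ≤ κ' * ((Z₁.card : ℝ) + Z₂.card - 1) :=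
              mul_le_mul_of_nonneg_left (by linarith) hκ'.le
            have e2 : κ' * (Z₂.card : ℝ) ≤ κ * Z₂.card :=
              mul_le_mul_of_nonneg_right hκ.le (Nat.cast_nonneg _)
            nlinarith [e1, e2]
          calc F (Z₁, Z₂)
              ≤ (Real.exp (-κ') * Real.exp (-((κ - κ') * Z₁.card)) *
                  Real.exp (κ * Z₁.card) * Real.exp (κ * Z₂.card)) *
                  (‖U Z₁‖ * ‖V Z₂‖) := by
                rw [hF]
                exact mul_le_mul_of_nonneg_right hexp (by positivity)
            _ = c₁ * (Real.exp (κ * Z₂.card) * ‖V Z₂‖) := by rw [hc₁]; ring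
      _ = ∑ y ∈ Z₁, c₁ * ∑ Z₂ ∈ Finset.univ.filter (fun Z₂ : Finset Λ => y ∈ Z₂),
            (Real.exp (κ * Z₂.card) * ‖V Z₂‖) := by
          refine Finset.sum_congr rfl fun y _ => ?_
          rw [Finset.mul_sum]
      _ ≤ ∑ y ∈ Z₁, c₁ * potNorm κ V :=
          Finset.sum_le_sum fun y _ =>
            mul_le_mul_of_nonneg_left (aux_site_le κ V y) hc₁n
      _ = (Z₁.card : ℝ) * c₁ * potNorm κ V := by
          rw [Finset.sum_const, nsmul_eq_mul]; ring
      _ ≤ 1 / (κ' * (κ - κ')) * (Real.exp (κ * Z₁.card) * ‖U Z₁‖) * potNorm κ V := by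
          refine mul_le_mul_of_nonneg_right ?_ hVn
          have k1 : Real.exp (-κ') ≤ 1 / κ' := by
            rw [Real.exp_neg]
            rw [inv_eq_one_div, div_le_div_iff₀ (Real.exp_pos _) hκ']
            have := Real.add_one_le_exp κ'
            nlinarith [Real.exp_pos κ']
          have k2 : (Z₁.card : ℝ) * Real.exp (-((κ - κ') * Z₁.card)) ≤ 1 / (κ - κ') := by
            set t : ℝ := (κ - κ') * Z₁.card with hts
            have ht : 0 ≤ t := by positivity
            have h3 : t ≤ Real.exp t := by linarith [Real.add_one_le_exp t]
            rw [Real.exp_neg, ← div_eq_mul_inv, div_le_div_iff₀ (Real.exp_pos _) hδ]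
            calc (Z₁.card : ℝ) * (κ - κ') = t := by rw [hts]; ring
              _ ≤ 1 * Real.exp t := by linarith
          calc (Z₁.card : ℝ) * c₁
              = (Real.exp (-κ') * ((Z₁.card : ℝ) * Real.exp (-((κ - κ') * Z₁.card)))) *
                (Real.exp (κ * Z₁.card) * ‖U Z₁‖) := by rw [hc₁]; ring
            _ ≤ (1 / κ' * (1 / (κ - κ'))) * (Real.exp (κ * Z₁.card) * ‖U Z₁‖) := by
                refine mul_le_mul_of_nonneg_right ?_ (by positivity)
                refine mul_le_mul k1 k2 ?_ (by positivity)
                positivity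
            _ = 1 / (κ' * (κ - κ')) * (Real.exp (κ * Z₁.card) * ‖U Z₁‖) := by
                rw [div_mul_div_comm, one_mul]
  calc ∑ Z₁ ∈ Finset.univ.filter (fun Z₁ : Finset Λ => x ∈ Z₁),
        ∑ Z₂ ∈ Finset.univ.filter (fun Z₂ : Finset Λ => (Z₁ ∩ Z₂).Nonempty), F (Z₁, Z₂)
      ≤ ∑ Z₁ ∈ Finset.univ.filter (fun Z₁ : Finset Λ => x ∈ Z₁),
          1 / (κ' * (κ - κ')) * (Real.exp (κ * Z₁.card) * ‖U Z₁‖) * potNorm κ V :=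
        Finset.sum_le_sum fun Z₁ _ => perZ₁ Z₁
    _ = 1 / (κ' * (κ - κ')) *
        (∑ Z₁ ∈ Finset.univ.filter (fun Z₁ : Finset Λ => x ∈ Z₁),
          Real.exp (κ * Z₁.card) * ‖U Z₁‖) * potNorm κ V := by
        rw [Finset.mul_sum, Finset.sum_mul]
    _ ≤ 1 / (κ' * (κ - κ')) * potNorm κ U * potNorm κ V := by
        refine mul_le_mul_of_nonneg_right ?_ hVn
        exact mul_le_mul_of_nonneg_left (aux_site_le κ U x) (by positivity)

/-- Lemma 4.1 of Abanin et al.: for potentials `W`, `Θ` and `0 < κ′ < κ`,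
`‖ad_W Θ‖_{κ′} ≤ (18/(κ′(κ − κ′))) ‖Θ‖_κ ‖W‖_κ`. -/
theorem potNorm_adPot_le (hq : 2 ≤ q) (κ' κ : ℝ) (hκ' : 0 < κ') (hκ : κ' < κ)
    (W Θ : Finset Λ → Op Λ q) (hW : IsPotential W) (hΘ : IsPotential Θ) :
    potNorm κ' (adPot W Θ) ≤ 18 / (κ' * (κ - κ')) * potNorm κ Θ * potNorm κ W := by
  have hδ : 0 < κ - κ' := sub_pos.mpr hκ
  have hN : 0 ≤ potNorm κ Θ := aux_potNorm_nonneg _ _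
  have hM : 0 ≤ potNorm κ W := aux_potNorm_nonneg _ _
  have hRHS : 0 ≤ 18 / (κ' * (κ - κ')) * potNorm κ Θ * potNorm κ W :=
    mul_nonneg (mul_nonneg (by positivity) hN) hM
  rw [potNorm]
  refine Real.iSup_le (fun x => ?_) hRHS
  set g : Finset Λ × Finset Λ → ℝ :=
    fun p => Real.exp (κ' * (p.1 ∪ p.2).card) * (2 * (‖W p.1‖ * ‖Θ p.2‖)) with hg
  have hgn : ∀ p, 0 ≤ g p := fun p => by rw [hg]; positivity
  set S : Finset (Finset Λ × Finset Λ) := Finset.univ.filter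
    (fun p : Finset Λ × Finset Λ => x ∈ p.1 ∪ p.2 ∧ (p.1 ∩ p.2).Nonempty) with hS
  set S₁ : Finset (Finset Λ × Finset Λ) := Finset.univ.filter
    (fun p : Finset Λ × Finset Λ => x ∈ p.1 ∧ (p.1 ∩ p.2).Nonempty) with hS₁
  set S₂ : Finset (Finset Λ × Finset Λ) := Finset.univ.filter
    (fun p : Finset Λ × Finset Λ => x ∈ p.2 ∧ (p.1 ∩ p.2).Nonempty) with hS₂
  have hA : ∀ Z : Finset Λ, Real.exp (κ' * Z.card) * ‖adPot W Θ Z‖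
      ≤ ∑ p ∈ Finset.univ.filter
          (fun p : Finset Λ × Finset Λ => p.1 ∪ p.2 = Z ∧ (p.1 ∩ p.2).Nonempty), g p := by
    intro Z
    have hnorm : ‖adPot W Θ Z‖ ≤ ∑ p ∈ Finset.univ.filter
        (fun p : Finset Λ × Finset Λ => p.1 ∪ p.2 = Z ∧ (p.1 ∩ p.2).Nonempty),
        2 * (‖W p.1‖ * ‖Θ p.2‖) := by
      rw [adPot]
      refine (norm_sum_le _ _).trans (Finset.sum_le_sum fun p _ => ?_)
      calc ‖W p.1 * Θ p.2 - Θ p.2 * W p.1‖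
          ≤ ‖W p.1 * Θ p.2‖ + ‖Θ p.2 * W p.1‖ := norm_sub_le _ _
        _ ≤ ‖W p.1‖ * ‖Θ p.2‖ + ‖Θ p.2‖ * ‖W p.1‖ :=
            add_le_add (norm_mul_le _ _) (norm_mul_le _ _)
        _ = 2 * (‖W p.1‖ * ‖Θ p.2‖) := by ring
    calc Real.exp (κ' * Z.card) * ‖adPot W Θ Z‖
        ≤ Real.exp (κ' * Z.card) * ∑ p ∈ Finset.univ.filter
            (fun p : Finset Λ × Finset Λ => p.1 ∪ p.2 = Z ∧ (p.1 ∩ p.2).Nonempty),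
            2 * (‖W p.1‖ * ‖Θ p.2‖) :=
          mul_le_mul_of_nonneg_left hnorm (Real.exp_pos _).le
      _ = ∑ p ∈ Finset.univ.filter
            (fun p : Finset Λ × Finset Λ => p.1 ∪ p.2 = Z ∧ (p.1 ∩ p.2).Nonempty),
            Real.exp (κ' * Z.card) * (2 * (‖W p.1‖ * ‖Θ p.2‖)) := Finset.mul_sum _ _ _
      _ = _ := Finset.sum_congr rfl fun p hp => by
            obtain ⟨h1, _⟩ := (Finset.mem_filter.mp hp).2
            rw [hg]; simp only []; rw [h1]
  have fib : ∑ Z ∈ Finset.univ.filter (fun Z : Finset Λ => x ∈ Z),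
      ∑ p ∈ Finset.univ.filter
          (fun p : Finset Λ × Finset Λ => p.1 ∪ p.2 = Z ∧ (p.1 ∩ p.2).Nonempty), g p
      = ∑ p ∈ S, g p := by
    rw [← Finset.sum_fiberwise_of_maps_to (g := fun p : Finset Λ × Finset Λ => p.1 ∪ p.2)
        (t := Finset.univ.filter (fun Z : Finset Λ => x ∈ Z))
        (fun p hp => by
          simp only [hS, Finset.mem_filter, Finset.mem_univ, true_and] at hp ⊢
          exact hp.1) g]
    refine Finset.sum_congr rfl fun Z hZ => ?_
    have hxZ : x ∈ Z := by simpa using hZ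
    refine Finset.sum_congr ?_ fun _ _ => rfl
    ext p
    simp only [hS, Finset.mem_filter, Finset.mem_univ, true_and]
    constructor
    · rintro ⟨h1, h2⟩
      exact ⟨⟨by rw [h1]; exact hxZ, h2⟩, h1⟩
    · rintro ⟨⟨_, h2⟩, h1⟩
      exact ⟨h1, h2⟩
  have hsub : S ⊆ S₁ ∪ S₂ := by
    intro p hp
    simp only [hS, hS₁, hS₂, Finset.mem_filter, Finset.mem_union, Finset.mem_univ,
      true_and] at hp ⊢
    rcases hp.1 with h | h
    · exact Or.inl ⟨h, hp.2⟩
    · exact Or.inr ⟨h, hp.2⟩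
  have split : ∑ p ∈ S, g p ≤ ∑ p ∈ S₁, g p + ∑ p ∈ S₂, g p := by
    calc ∑ p ∈ S, g p ≤ ∑ p ∈ S₁ ∪ S₂, g p :=
        Finset.sum_le_sum_of_subset_of_nonneg hsub fun p _ _ => hgn p
      _ ≤ ∑ p ∈ S₁, g p + ∑ p ∈ S₂, g p := by
        have h1 := Finset.sum_union_inter (s₁ := S₁) (s₂ := S₂) (f := g)
        have h0 : 0 ≤ ∑ p ∈ S₁ ∩ S₂, g p := Finset.sum_nonneg fun p _ => hgn p
        linarith
  have case1 : ∑ p ∈ S₁, g p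
      ≤ 2 * (1 / (κ' * (κ - κ')) * potNorm κ W * potNorm κ Θ) := by
    have h2 : ∑ p ∈ S₁, g p = 2 * ∑ p ∈ S₁,
        Real.exp (κ' * (p.1 ∪ p.2).card) * (‖W p.1‖ * ‖Θ p.2‖) := by
      rw [Finset.mul_sum]
      exact Finset.sum_congr rfl fun p _ => by rw [hg]; ring
    rw [h2, hS₁]
    exact mul_le_mul_of_nonneg_left (aux_key hκ' hκ W Θ x) (by norm_num)
  have case2 : ∑ p ∈ S₂, g p
      ≤ 2 * (1 / (κ' * (κ - κ')) * potNorm κ Θ * potNorm κ W) := by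
    have hswap : ∑ p ∈ S₂, g p = 2 * ∑ p ∈ Finset.univ.filter
        (fun p : Finset Λ × Finset Λ => x ∈ p.1 ∧ (p.1 ∩ p.2).Nonempty),
        Real.exp (κ' * (p.1 ∪ p.2).card) * (‖Θ p.1‖ * ‖W p.2‖) := by
      rw [Finset.mul_sum]
      refine Finset.sum_nbij' (fun p => p.swap) (fun p => p.swap) ?_ ?_ ?_ ?_ ?_
      · intro p hp
        simp only [hS₂, Finset.mem_filter, Finset.mem_univ, true_and] at hp ⊢
        exact ⟨hp.1, by rw [Finset.inter_comm]; exact hp.2⟩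
      · intro p hp
        simp only [hS₂, Finset.mem_filter, Finset.mem_univ, true_and] at hp ⊢
        exact ⟨hp.1, by rw [Finset.inter_comm]; exact hp.2⟩
      · intro p _; rfl
      · intro p _; rfl
      · intro p _
        rw [hg]
        simp only [Prod.fst_swap, Prod.snd_swap]
        rw [Finset.union_comm p.2 p.1]
        ring
    rw [hswap]
    exact mul_le_mul_of_nonneg_left (aux_key hκ' hκ Θ W x) (by norm_num)
  calc ∑ Z ∈ Finset.univ.filter (fun Z : Finset Λ => x ∈ Z),
        Real.exp (κ' * Z.card) * ‖adPot W Θ Z‖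
      ≤ ∑ Z ∈ Finset.univ.filter (fun Z : Finset Λ => x ∈ Z),
          ∑ p ∈ Finset.univ.filter
            (fun p : Finset Λ × Finset Λ => p.1 ∪ p.2 = Z ∧ (p.1 ∩ p.2).Nonempty), g p :=
        Finset.sum_le_sum fun Z _ => hA Z
    _ = ∑ p ∈ S, g p := fib
    _ ≤ ∑ p ∈ S₁, g p + ∑ p ∈ S₂, g p := split
    _ ≤ 2 * (1 / (κ' * (κ - κ')) * potNorm κ W * potNorm κ Θ)
        + 2 * (1 / (κ' * (κ - κ')) * potNorm κ Θ * potNorm κ W) := add_le_add case1 case2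
    _ = 4 * (1 / (κ' * (κ - κ')) * (potNorm κ Θ * potNorm κ W)) := by ring
    _ ≤ 18 * (1 / (κ' * (κ - κ')) * (potNorm κ Θ * potNorm κ W)) := by
        have hnn : 0 ≤ 1 / (κ' * (κ - κ')) * (potNorm κ Θ * potNorm κ W) :=
          mul_nonneg (by positivity) (mul_nonneg hN hM)
        linarith
    _ = 18 / (κ' * (κ - κ')) * potNorm κ Θ * potNorm κ W := by ring

end
end

section
/- Let Λ be a finite metric space, σ > 0, R_l = e^{σl}, κ > 0, γ > 0, and let Φ be a range-indexed potential on Λ with ‖Φ‖_{κ,γ} < ∞. Define Φ_Z = Σ_{l=0}^∞ Φ_{Z,l} (the series converges absolutely in operator norm). Then for every x ∈ Λ and every r > 0: (i) Σ over all Z ∋ x with diam(Z) ≥ r of ‖Φ_Z‖ is at most e^{−γ} γ^γ (κ r)^{−γ} ‖Φ‖_{κ,γ}; and (ii) Σ_{y ∈ Λ} Σ over all Z containing both x and y of ‖Φ_Z‖ is at most κ^{−1} ‖Φ‖_{κ,γ}. -/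
open scoped Matrix.Norms.L2Operator

noncomputable section

variable {Λ : Type*} [Fintype Λ] [DecidableEq Λ] [MetricSpace Λ] {q : ℕ}

/-- A finite subset `Z` of a metric space is `R`-ranged if every pair of its points is
connected by a finite sequence of points of `Z` making jumps of size at most `R`. -/
def IsRanged {M : Type*} [MetricSpace M] (Z : Finset M) (R : ℝ) : Prop :=
  ∀ x ∈ Z, ∀ y ∈ Z, ∃ (n : ℕ) (c : Fin (n + 1) → M),
    (∀ i, c i ∈ Z) ∧ c 0 = x ∧ c (Fin.last n) = y ∧
    ∀ i : Fin n, dist (c i.castSucc) (c i.succ) ≤ R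

/-- A range-indexed potential (with range hierarchy `R_l = e^{σl}`) is a family
`Φ = (Φ_{Z,l})` with `Φ_{Z,l}` supported on `Z` and vanishing unless `Z` is
`R_l`-ranged. -/
def IsRIPotential (σ : ℝ) (Φ : Finset Λ → ℕ → Op Λ q) : Prop :=
  ∀ Z l, SupportedOn (Φ Z l) Z ∧ (¬ IsRanged Z (Real.exp (σ * l)) → Φ Z l = 0)

/-- The `l`-th term, at site `x`, of the two-parameter norm of a range-indexed potential:
`R_l^γ Σ_{Z ∋ x} e^{κ|Z|} ‖Φ_{Z,l}‖`. -/
def riNormTerm (σ κ γ : ℝ) (Φ : Finset Λ → ℕ → Op Λ q) (x : Λ) (l : ℕ) : ℝ :=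
  Real.exp (σ * l) ^ γ *
    ∑ Z ∈ Finset.univ.filter (fun Z : Finset Λ => x ∈ Z),
      Real.exp (κ * Z.card) * ‖Φ Z l‖

/-- The two-parameter norm `‖Φ‖_{κ,γ} = max_{x∈Λ} Σ_l R_l^γ Σ_{Z ∋ x} e^{κ|Z|} ‖Φ_{Z,l}‖`
of a range-indexed potential. -/
def riNorm (σ κ γ : ℝ) (Φ : Finset Λ → ℕ → Op Λ q) : ℝ :=
  ⨆ x : Λ, ∑' l : ℕ, riNormTerm σ κ γ Φ x l

/-- Finiteness (summability) of the series defining `‖Φ‖_{κ,γ}`. -/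
def RINormSummable (σ κ γ : ℝ) (Φ : Finset Λ → ℕ → Op Λ q) : Prop :=
  ∀ x : Λ, Summable (riNormTerm σ κ γ Φ x)


/-- A chain of `n+1` points in `Z` with jumps of size at most `R` moves the endpoint a
distance at most `Z.card * R`. -/
theorem chain_dist_le {M : Type*} [MetricSpace M] (Z : Finset M) {R : ℝ} (hR : 0 ≤ R) :
    ∀ n : ℕ, ∀ c : ℕ → M, (∀ i ≤ n, c i ∈ Z) → (∀ i < n, dist (c i) (c (i + 1)) ≤ R) →
      dist (c 0) (c n) ≤ Z.card * R := by
  intro n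
  induction n using Nat.strong_induction_on with
  | _ n IH =>
    intro c hmem hjump
    by_cases hn : n < Z.card
    · calc dist (c 0) (c n) ≤ ∑ i ∈ Finset.range n, dist (c i) (c (i + 1)) :=
            dist_le_range_sum_dist c n
        _ ≤ ∑ _i ∈ Finset.range n, R :=
            Finset.sum_le_sum fun i hi => hjump i (Finset.mem_range.mp hi)
        _ = (n : ℝ) * R := by simp [mul_comm]
        _ ≤ (Z.card : ℝ) * R :=
            mul_le_mul_of_nonneg_right (by exact_mod_cast hn.le) hR
    · push_neg at hn
      obtain ⟨i, hi, j, hj, hne, heq⟩ :=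
        Finset.exists_ne_map_eq_of_card_lt_of_maps_to (s := Finset.range (n + 1)) (t := Z)
          (by simpa using Nat.lt_succ_of_le hn)
          (fun i hi => hmem i (Nat.lt_succ_iff.mp (Finset.mem_range.mp hi)))
      rw [Finset.mem_range] at hi hj
      -- normalize so that i₀ < j₀
      set i₀ := min i j with hi₀
      set j₀ := max i j with hj₀
      have hij : i₀ < j₀ := by
        rcases lt_or_gt_of_ne hne with h | h
        · simp [hi₀, hj₀, min_eq_left h.le, max_eq_right h.le, h]
        · simp [hi₀, hj₀, min_eq_right h.le, max_eq_left h.le, h]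
      have heq' : c i₀ = c j₀ := by
        rcases le_total i j with h | h
        · rw [hi₀, hj₀, min_eq_left h, max_eq_right h]; exact heq
        · rw [hi₀, hj₀, min_eq_right h, max_eq_left h]; exact heq.symm
      have hj₀n : j₀ ≤ n := by omega
      set d := j₀ - i₀ with hd
      have hd1 : 1 ≤ d := by omega
      have hdn : d ≤ n := by omega
      set c' : ℕ → M := fun k => if k < i₀ then c k else c (k + d) with hc'
      have h0 : c' 0 = c 0 := by
        by_cases h : 0 < i₀
        · simp [hc', h]
        · have : i₀ = 0 := by omega
          simp only [hc', if_neg (by omega : ¬ (0:ℕ) < i₀), zero_add]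
          rw [show d = j₀ from by omega, ← heq', this]
      have hlast : c' (n - d) = c n := by
        have : ¬ n - d < i₀ := by omega
        simp only [hc', if_neg this]
        congr 1
        omega
      have key := IH (n - d) (by omega) c'
        (fun k hk => by
          by_cases h : k < i₀ <;> simp only [hc', if_pos, if_neg, h, if_true, if_false]
          · exact hmem k (by omega)
          · exact hmem (k + d) (by omega))
        (fun k hk => by
          by_cases h : k + 1 < i₀
          · simp only [hc', if_pos (by omega : k < i₀), if_pos h]
            exact hjump k (by omega)
          · by_cases h2 : k < i₀
            · -- k + 1 = i₀
              have hk1 : k + 1 = i₀ := by omega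
              simp only [hc', if_pos h2, if_neg h]
              rw [hk1, show i₀ + d = j₀ from by omega, ← heq', ← hk1]
              exact hjump k (by omega)
            · simp only [hc', if_neg h2, if_neg (by omega : ¬ k + 1 < i₀)]
              rw [show k + 1 + d = (k + d) + 1 from by omega]
              exact hjump (k + d) (by omega))
      rw [h0, hlast] at key
      exact key

/-- An `R`-ranged finite set has diameter at most `card * R`. -/
theorem IsRanged.diam_le {M : Type*} [MetricSpace M] {Z : Finset M} {R : ℝ} (hR : 0 ≤ R)
    (h : ∀ x ∈ Z, ∀ y ∈ Z, ∃ (n : ℕ) (c : Fin (n + 1) → M),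
      (∀ i, c i ∈ Z) ∧ c 0 = x ∧ c (Fin.last n) = y ∧
      ∀ i : Fin n, dist (c i.castSucc) (c i.succ) ≤ R) :
    Metric.diam (Z : Set M) ≤ Z.card * R := by
  apply Metric.diam_le_of_forall_dist_le (by positivity)
  intro a ha b hb
  obtain ⟨n, c, hmem, h0, hl, hjump⟩ := h a (by simpa using ha) b (by simpa using hb)
  have := chain_dist_le Z hR n (fun i => c ⟨min i n, by omega⟩)
    (fun i _ => hmem _)
    (fun i hi => by
      simp only [show min i n = i from by omega, show min (i + 1) n = i + 1 from by omega]
      exact hjump ⟨i, hi⟩)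
  have e0 : (⟨min 0 n, by omega⟩ : Fin (n + 1)) = 0 := by ext; simp
  have e1 : (⟨min n n, by omega⟩ : Fin (n + 1)) = Fin.last n := by ext; simp [Fin.last]
  simp only [e0, e1, h0, hl] at this
  exact this

theorem rpow_le_exp_aux {t γ : ℝ} (ht : 0 < t) (hγ : 0 < γ) :
    t ^ γ ≤ γ ^ γ * Real.exp (t - γ) := by
  rw [Real.rpow_def_of_pos ht, Real.rpow_def_of_pos hγ, ← Real.exp_add]
  apply Real.exp_le_exp.mpr
  have h := Real.log_le_sub_one_of_pos (show 0 < t / γ by positivity)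
  rw [Real.log_div ht.ne' hγ.ne'] at h
  have h2 := mul_le_mul_of_nonneg_right h hγ.le
  have h3 : (t / γ - 1) * γ = t - γ := by field_simp
  nlinarith

open Classical in
/-- A range-indexed potential with finite two-parameter norm `‖Φ‖_{κ,γ}` defines a
potential `Φ_Z = Σ_l Φ_{Z,l}` (the series converging absolutely in operator norm for
nonempty `Z`), whose terms obey:
(i) a power-law decay with range, `Σ_{Z ∋ x, diam(Z) ≥ r} ‖Φ_Z‖ ≤ e^{−γ}γ^γ (κr)^{−γ} ‖Φ‖_{κ,γ}`;
(ii) a bound on the interactions coupling pairs of sites,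
`Σ_y Σ_{Z ∋ x,y} ‖Φ_Z‖ ≤ κ⁻¹ ‖Φ‖_{κ,γ}`.
These verify the hypotheses of the multi-body long-range Lieb–Robinson bound. -/
theorem riPotential_decay_bounds (hq : 2 ≤ q) (σ κ γ : ℝ)
    (hσ : 0 < σ) (hκ : 0 < κ) (hγ : 0 < γ)
    (Φ : Finset Λ → ℕ → Op Λ q) (hΦ : IsRIPotential σ Φ)
    (hsum : RINormSummable σ κ γ Φ) :
    (∀ Z : Finset Λ, Z.Nonempty → Summable fun l : ℕ => ‖Φ Z l‖) ∧
    ∀ (x : Λ) (r : ℝ), 0 < r →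
      (∑ Z ∈ Finset.univ.filter
          (fun Z : Finset Λ => x ∈ Z ∧ r ≤ Metric.diam (Z : Set Λ)),
          ‖∑' l : ℕ, Φ Z l‖)
        ≤ Real.exp (-γ) * γ ^ γ * (κ * r) ^ (-γ) * riNorm σ κ γ Φ ∧
      (∑ y : Λ, ∑ Z ∈ Finset.univ.filter
          (fun Z : Finset Λ => x ∈ Z ∧ y ∈ Z), ‖∑' l : ℕ, Φ Z l‖)
        ≤ κ⁻¹ * riNorm σ κ γ Φ := by
  classical
  haveI : CompleteSpace (Op Λ q) := FiniteDimensional.complete ℂ _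
  set g : Finset Λ → ℕ → ℝ := fun Z l =>
    Real.exp (σ * l) ^ γ * (Real.exp (κ * Z.card) * ‖Φ Z l‖) with hg
  have hg_nonneg : ∀ Z l, 0 ≤ g Z l := fun Z l => by positivity
  have hterm : ∀ (x : Λ) l, riNormTerm σ κ γ Φ x l =
      ∑ Z ∈ Finset.univ.filter (fun Z : Finset Λ => x ∈ Z), g Z l := by
    intro x l
    rw [riNormTerm, Finset.mul_sum]
  have hle_term : ∀ (x : Λ) (Z : Finset Λ), x ∈ Z → ∀ l,
      g Z l ≤ riNormTerm σ κ γ Φ x l := by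
    intro x Z hx l
    rw [hterm]
    exact Finset.single_le_sum (fun Z _ => hg_nonneg Z l)
      (Finset.mem_filter.mpr ⟨Finset.mem_univ _, hx⟩)
  have hRγ : ∀ l : ℕ, (1 : ℝ) ≤ Real.exp (σ * l) ^ γ := fun l =>
    Real.one_le_rpow (Real.one_le_exp (mul_nonneg hσ.le (Nat.cast_nonneg l))) hγ.le
  have hnorm_le_g : ∀ Z l, ‖Φ Z l‖ ≤ g Z l := by
    intro Z l
    calc ‖Φ Z l‖ ≤ Real.exp (κ * Z.card) * ‖Φ Z l‖ :=
          le_mul_of_one_le_left (norm_nonneg _)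
            (Real.one_le_exp (by positivity))
      _ ≤ g Z l := le_mul_of_one_le_left (by positivity) (hRγ l)
  have hgsum : ∀ (x : Λ) (Z : Finset Λ), x ∈ Z → Summable (g Z) := fun x Z hx =>
    Summable.of_nonneg_of_le (hg_nonneg Z) (hle_term x Z hx) (hsum x)
  have hΦsum : ∀ Z : Finset Λ, Z.Nonempty → Summable fun l : ℕ => ‖Φ Z l‖ := by
    rintro Z ⟨x, hx⟩
    exact Summable.of_nonneg_of_le (fun l => norm_nonneg _) (hnorm_le_g Z) (hgsum x Z hx)
  refine ⟨hΦsum, ?_⟩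
  intro x r hr
  have hnorm_ge : ∑' l, riNormTerm σ κ γ Φ x l ≤ riNorm σ κ γ Φ := by
    rw [riNorm]
    exact le_ciSup (Set.Finite.bddAbove
      (Set.finite_range fun x' : Λ => ∑' l, riNormTerm σ κ γ Φ x' l)) x
  have key : ∀ s : Finset (Finset Λ), (∀ Z ∈ s, x ∈ Z) →
      ∑ Z ∈ s, ∑' l, g Z l ≤ riNorm σ κ γ Φ := by
    intro s hs
    have hsm : ∀ Z ∈ s, Summable (g Z) := fun Z hZ => hgsum x Z (hs Z hZ)
    rw [← Summable.tsum_finsetSum hsm]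
    refine le_trans (Summable.tsum_le_tsum ?_ (summable_sum hsm) (hsum x)) hnorm_ge
    intro l
    rw [hterm]
    refine Finset.sum_le_sum_of_subset_of_nonneg ?_ (fun Z _ _ => hg_nonneg Z l)
    intro Z hZ
    exact Finset.mem_filter.mpr ⟨Finset.mem_univ _, hs Z hZ⟩
  have htsum_norm : ∀ Z : Finset Λ, x ∈ Z → ‖∑' l : ℕ, Φ Z l‖ ≤ ∑' l : ℕ, ‖Φ Z l‖ :=
    fun Z hx' => norm_tsum_le_tsum_norm (hΦsum Z ⟨x, hx'⟩)
  constructor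
  · -- part (i)
    set C : ℝ := Real.exp (-γ) * γ ^ γ * (κ * r) ^ (-γ) with hC
    have hC0 : 0 ≤ C := by positivity
    have hper : ∀ Z : Finset Λ, x ∈ Z → r ≤ Metric.diam (Z : Set Λ) →
        ∀ l : ℕ, ‖Φ Z l‖ ≤ C * g Z l := by
      intro Z hxZ hdiam l
      by_cases hz : Φ Z l = 0
      · simp only [hz, norm_zero]
        exact mul_nonneg hC0 (hg_nonneg Z l)
      · have hranged : IsRanged Z (Real.exp (σ * l)) := by
          by_contra hcon
          exact hz ((hΦ Z l).2 hcon)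
        have hdZ : Metric.diam (Z : Set Λ) ≤ Z.card * Real.exp (σ * l) :=
          IsRanged.diam_le (Real.exp_pos _).le hranged
        set t : ℝ := κ * Z.card with hts
        have hcard1 : (1 : ℝ) ≤ Z.card := by
          exact_mod_cast Finset.card_pos.mpr ⟨x, hxZ⟩
        have ht : 0 < t := by positivity
        have hrt : κ * r ≤ t * Real.exp (σ * l) := by
          have : r ≤ Z.card * Real.exp (σ * l) := hdiam.trans hdZ
          calc κ * r ≤ κ * (Z.card * Real.exp (σ * l)) :=
                mul_le_mul_of_nonneg_left this hκ.le
            _ = t * Real.exp (σ * l) := by rw [hts]; ring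
        have hbd : t ^ γ ≤ γ ^ γ * (Real.exp (-γ) * Real.exp t) := by
          have h := rpow_le_exp_aux ht hγ
          rwa [sub_eq_add_neg, Real.exp_add, mul_comm (Real.exp t)] at h
        have h2 : (κ * r) ^ γ ≤ t ^ γ * Real.exp (σ * l) ^ γ := by
          rw [← Real.mul_rpow ht.le (Real.exp_pos _).le]
          exact Real.rpow_le_rpow (by positivity) hrt hγ.le
        have hone : (1 : ℝ) ≤ C * (Real.exp (σ * l) ^ γ * Real.exp t) := by
          have hκr : (0 : ℝ) < κ * r := by positivity
          calc (1 : ℝ) = (κ * r) ^ (-γ) * (κ * r) ^ γ := by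
                rw [← Real.rpow_add hκr, neg_add_cancel, Real.rpow_zero]
            _ ≤ (κ * r) ^ (-γ) * (t ^ γ * Real.exp (σ * l) ^ γ) := by
                refine mul_le_mul_of_nonneg_left h2 (by positivity)
            _ ≤ (κ * r) ^ (-γ) *
                ((γ ^ γ * (Real.exp (-γ) * Real.exp t)) * Real.exp (σ * l) ^ γ) := by
                refine mul_le_mul_of_nonneg_left
                  (mul_le_mul_of_nonneg_right hbd (by positivity)) (by positivity)
            _ = C * (Real.exp (σ * l) ^ γ * Real.exp t) := by rw [hC]; ring
        calc ‖Φ Z l‖ = 1 * ‖Φ Z l‖ := (one_mul _).symm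
          _ ≤ (C * (Real.exp (σ * l) ^ γ * Real.exp t)) * ‖Φ Z l‖ :=
              mul_le_mul_of_nonneg_right hone (norm_nonneg _)
          _ = C * g Z l := by rw [hg, hts]; ring
    calc ∑ Z ∈ Finset.univ.filter
            (fun Z : Finset Λ => x ∈ Z ∧ r ≤ Metric.diam (Z : Set Λ)), ‖∑' l : ℕ, Φ Z l‖
        ≤ ∑ Z ∈ Finset.univ.filter
            (fun Z : Finset Λ => x ∈ Z ∧ r ≤ Metric.diam (Z : Set Λ)), ∑' l : ℕ, ‖Φ Z l‖ :=
          Finset.sum_le_sum fun Z hZ => htsum_norm Z (Finset.mem_filter.mp hZ).2.1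
      _ ≤ ∑ Z ∈ Finset.univ.filter
            (fun Z : Finset Λ => x ∈ Z ∧ r ≤ Metric.diam (Z : Set Λ)), ∑' l : ℕ, C * g Z l := by
          refine Finset.sum_le_sum fun Z hZ => ?_
          obtain ⟨-, hxZ, hdiam⟩ :
              Z ∈ Finset.univ ∧ x ∈ Z ∧ r ≤ Metric.diam (Z : Set Λ) := by
            simpa using Finset.mem_filter.mp hZ
          exact Summable.tsum_le_tsum (hper Z hxZ hdiam) (hΦsum Z ⟨x, hxZ⟩)
            ((hgsum x Z hxZ).mul_left C)
      _ = C * ∑ Z ∈ Finset.univ.filter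
            (fun Z : Finset Λ => x ∈ Z ∧ r ≤ Metric.diam (Z : Set Λ)), ∑' l : ℕ, g Z l := by
          simp_rw [tsum_mul_left]
          rw [Finset.mul_sum]
      _ ≤ C * riNorm σ κ γ Φ :=
          mul_le_mul_of_nonneg_left
            (key _ fun Z hZ => (Finset.mem_filter.mp hZ).2.1) hC0
  · -- part (ii)
    have hswap : ∑ y : Λ, ∑ Z ∈ Finset.univ.filter
          (fun Z : Finset Λ => x ∈ Z ∧ y ∈ Z), ‖∑' l : ℕ, Φ Z l‖
        = ∑ Z ∈ Finset.univ.filter (fun Z : Finset Λ => x ∈ Z),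
            (Z.card : ℝ) * ‖∑' l : ℕ, Φ Z l‖ := by
      simp_rw [Finset.sum_filter]
      rw [Finset.sum_comm]
      refine Finset.sum_congr rfl fun Z _ => ?_
      by_cases hxZ : x ∈ Z
      · simp [hxZ, Finset.sum_ite_mem, Finset.univ_inter, Finset.sum_const,
          nsmul_eq_mul, mul_comm]
      · simp [hxZ]
    rw [hswap]
    have hper2 : ∀ Z : Finset Λ, x ∈ Z →
        (Z.card : ℝ) * ‖∑' l : ℕ, Φ Z l‖ ≤ κ⁻¹ * ∑' l : ℕ, g Z l := by
      intro Z hxZ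
      have hcard : (Z.card : ℝ) ≤ κ⁻¹ * Real.exp (κ * Z.card) := by
        have h1 : κ * Z.card ≤ Real.exp (κ * Z.card) := by
          have := Real.add_one_le_exp (κ * Z.card)
          nlinarith [mul_nonneg hκ.le (Nat.cast_nonneg Z.card)]
        calc (Z.card : ℝ) = κ⁻¹ * (κ * Z.card) := by field_simp
          _ ≤ κ⁻¹ * Real.exp (κ * Z.card) :=
            mul_le_mul_of_nonneg_left h1 (inv_nonneg.mpr hκ.le)
      have hT : ‖∑' l : ℕ, Φ Z l‖ ≤ ∑' l : ℕ, ‖Φ Z l‖ := htsum_norm Z hxZ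
      calc (Z.card : ℝ) * ‖∑' l : ℕ, Φ Z l‖
          ≤ (κ⁻¹ * Real.exp (κ * Z.card)) * ∑' l : ℕ, ‖Φ Z l‖ :=
            mul_le_mul hcard hT (norm_nonneg _) (by positivity)
        _ = κ⁻¹ * ∑' l : ℕ, Real.exp (κ * Z.card) * ‖Φ Z l‖ := by
            rw [tsum_mul_left, mul_assoc]
        _ ≤ κ⁻¹ * ∑' l : ℕ, g Z l := by
            refine mul_le_mul_of_nonneg_left ?_ (inv_nonneg.mpr hκ.le)
            refine Summable.tsum_le_tsum (fun l => ?_) ((hΦsum Z ⟨x, hxZ⟩).mul_left _)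
              (hgsum x Z hxZ)
            exact le_mul_of_one_le_left (by positivity) (hRγ l)
    calc ∑ Z ∈ Finset.univ.filter (fun Z : Finset Λ => x ∈ Z),
          (Z.card : ℝ) * ‖∑' l : ℕ, Φ Z l‖
        ≤ ∑ Z ∈ Finset.univ.filter (fun Z : Finset Λ => x ∈ Z),
            κ⁻¹ * ∑' l : ℕ, g Z l :=
          Finset.sum_le_sum fun Z hZ => hper2 Z (Finset.mem_filter.mp hZ).2
      _ = κ⁻¹ * ∑ Z ∈ Finset.univ.filter (fun Z : Finset Λ => x ∈ Z),
            ∑' l : ℕ, g Z l := by rw [Finset.mul_sum]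
      _ ≤ κ⁻¹ * riNorm σ κ γ Φ :=
          mul_le_mul_of_nonneg_left
            (key _ fun Z hZ => (Finset.mem_filter.mp hZ).2) (inv_nonneg.mpr hκ.le)

end
end
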